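/- Let P be a finite poset with a realizer {Λ₁, Λ₂} of two linear orders, and let Q be the complementary poset with order x ≤' y iff x ≤ y in Λ₁ and y ≤ x in Λ₂ (or x = y). Define w(x) to be the number of chains in Q with maximum element x. Then the valuation v on the downset lattice L of P defined by v(A) = Σ_{x∈A} w(x) is a bijection from L onto {0, 1, …, |L| - 1}. -/

import Mathlib

open Finset

variable (P : Type*) [PartialOrder P] [Fintype P] [DecidableEq P]

/-- The lattice of downsets (lower sets) of a finite poset `P`. -/
def DownSet : Type _ := {A : Finset P // IsLowerSet (↑A : Set P)}

variable {P}

instance : Lattice (DownSet P) :=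
  Subtype.lattice (fun _ _ hA hB => by simpa [Finset.sup_eq_union] using hA.union hB)
    (fun _ _ hA hB => by simpa [Finset.inf_eq_inter] using hA.inter hB)

instance : OrderBot (DownSet P) :=
  Subtype.orderBot (by simp [Finset.bot_eq_empty, isLowerSet_empty])

noncomputable instance : Fintype (DownSet P) :=
  Fintype.ofInjective Subtype.val Subtype.val_injective

/-- The valuation associated to a weight function `w`. -/
def vval (w : P → ℕ) (A : DownSet P) : ℕ := ∑ x ∈ A.1, w x

variable [DecidableRel ((· ≤ ·) : P → P → Prop)]

/-- The principal downset of `y`. -/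
def pd (y : P) : DownSet P :=
  ⟨univ.filter (· ≤ y), by
    intro a b hba ha
    simp only [coe_filter, Set.mem_setOf_eq, mem_univ, true_and] at *
    exact hba.trans ha⟩

/-- The dual valuation evaluated on the principal upset of `x`. -/
def vup (w : P → ℕ) (x : P) : ℕ := ∑ z ∈ univ.filter (fun z => x ≤ z), w z

/-- `T` is an initial segment for the valuation `v`. -/
def Initial (v : DownSet P → ℕ) (T : Set (DownSet P)) : Prop :=
  ∃ j, v '' T = {k | k < j}

/-- `T` is a final segment for the valuation `v`. -/
def Final (v : DownSet P → ℕ) (T : Set (DownSet P)) : Prop :=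
  ∃ j, v '' T = {k | j ≤ k ∧ k < Fintype.card (DownSet P)}

/-- The set of arbitrary (nonempty) joins of elements of `T`. -/
def joinSet (T : Set (DownSet P)) : Set (DownSet P) :=
  {a | ∃ S : Finset (DownSet P), ↑S ⊆ T ∧ ∃ hS : S.Nonempty, a = S.sup' hS id}

/-- The set of arbitrary (nonempty) meets of elements of `T`. -/
def meetSet (T : Set (DownSet P)) : Set (DownSet P) :=
  {a | ∃ S : Finset (DownSet P), ↑S ⊆ T ∧ ∃ hS : S.Nonempty, a = S.inf' hS id}

/-- A complete valuation: bijective onto `{0,…,|L|-1}`, join-closures of initial segments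
are initial segments, meet-closures of final segments are final segments. -/
def IsCompleteValuation (w : P → ℕ) : Prop :=
  Set.BijOn (vval w) Set.univ {k | k < Fintype.card (DownSet P)} ∧
  (∀ T, Initial (vval w) T → Initial (vval w) (joinSet T)) ∧
  (∀ T, Final (vval w) T → Final (vval w) (meetSet T))

/-- The complementary order from two linear orders: `x ≤' y` iff `le1 x y` and `le2 y x`. -/
def le'' (le1 le2 : P → P → Prop) (x y : P) : Prop := le1 x y ∧ le2 y x

/-- The number of chains (under the complementary order) with maximum element `y`. -/
noncomputable def chainCount (le1 le2 : P → P → Prop) (y : P) : ℕ :=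
  Set.ncard {C : Finset P | y ∈ C ∧ (∀ a ∈ C, le'' le1 le2 a y) ∧
    ∀ a ∈ C, ∀ b ∈ C, le'' le1 le2 a b ∨ le'' le1 le2 b a}

/-- `{le1, le2}` is a realizer of `P`. -/
def IsRealizer (le1 le2 : P → P → Prop) : Prop :=
  IsLinearOrder P le1 ∧ IsLinearOrder P le2 ∧ ∀ x y : P, x ≤ y ↔ le1 x y ∧ le2 x y

set_option linter.unusedSectionVars false

section MyAux

variable {le1 le2 : P → P → Prop}

lemma myExistsTop {r : P → P → Prop} (htrans : ∀ {a b c}, r a b → r b c → r a c)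
    (s : Finset P) (hs : s.Nonempty)
    (htot : ∀ a ∈ s, ∀ b ∈ s, r a b ∨ r b a) : ∃ m ∈ s, ∀ a ∈ s, r a m := by
  classical
  induction s using Finset.cons_induction with
  | empty => exact absurd hs (by simp)
  | cons a t ha ih =>
    rcases t.eq_empty_or_nonempty with rfl | ht
    · refine ⟨a, by simp, ?_⟩
      intro b hb
      simp only [cons_eq_insert, mem_insert, notMem_empty, or_false] at hb
      subst hb
      rcases htot b (by simp) b (by simp) with h | h <;> exact h
    · obtain ⟨m, hm, hmax⟩ := ih ht (fun x hx y hy =>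
        htot x (mem_cons_of_mem hx) y (mem_cons_of_mem hy))
      rcases htot a (mem_cons_self a t) m (mem_cons_of_mem hm) with h | h
      · exact ⟨m, mem_cons_of_mem hm, fun b hb => by
          rcases mem_cons.1 hb with rfl | hb
          · exact h
          · exact hmax b hb⟩
      · refine ⟨a, mem_cons_self a t, fun b hb => ?_⟩
        rcases mem_cons.1 hb with rfl | hb
        · rcases htot b (mem_cons_self b t) b (mem_cons_self b t) with h' | h' <;> exact h'
        · exact htrans (hmax b hb) h

open Classical in
/-- Chains (as finsets) in the complementary order with maximum `y`. -/
noncomputable def CMax (le1 le2 : P → P → Prop) (y : P) : Finset (Finset P) :=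
  univ.filter (fun C => y ∈ C ∧ (∀ a ∈ C, le'' le1 le2 a y) ∧
    ∀ a ∈ C, ∀ b ∈ C, le'' le1 le2 a b ∨ le'' le1 le2 b a)

lemma chainCount_eq_card (y : P) : chainCount le1 le2 y = (CMax le1 le2 y).card := by
  classical
  have : {C : Finset P | y ∈ C ∧ (∀ a ∈ C, le'' le1 le2 a y) ∧
      ∀ a ∈ C, ∀ b ∈ C, le'' le1 le2 a b ∨ le'' le1 le2 b a} = ↑(CMax le1 le2 y) := by
    ext C
    simp only [CMax, Set.mem_setOf_eq, coe_filter, mem_univ, true_and]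
  rw [chainCount, this, Set.ncard_coe_finset]

section Realizer
variable (h : IsRealizer le1 le2)
include h

lemma lle_refl (x : P) : le'' le1 le2 x x :=
  ⟨h.1.toIsPartialOrder.toIsPreorder.toRefl.refl x,
   h.2.1.toIsPartialOrder.toIsPreorder.toRefl.refl x⟩

lemma le1_trans {a b c : P} : le1 a b → le1 b c → le1 a c :=
  fun hab hbc => h.1.toIsPartialOrder.toIsPreorder.toIsTrans.trans a b c hab hbc

lemma le2_trans {a b c : P} : le2 a b → le2 b c → le2 a c :=
  fun hab hbc => h.2.1.toIsPartialOrder.toIsPreorder.toIsTrans.trans a b c hab hbc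

lemma le1_antisymm {a b : P} : le1 a b → le1 b a → a = b :=
  fun hab hba => h.1.toIsPartialOrder.toAntisymm.antisymm a b hab hba

lemma le2_antisymm {a b : P} : le2 a b → le2 b a → a = b :=
  fun hab hba => h.2.1.toIsPartialOrder.toAntisymm.antisymm a b hab hba

lemma le1_total (a b : P) : le1 a b ∨ le1 b a := h.1.toTotal.total a b

lemma le2_total (a b : P) : le2 a b ∨ le2 b a := h.2.1.toTotal.total a b

lemma lle_trans {a b c : P} (hab : le'' le1 le2 a b) (hbc : le'' le1 le2 b c) :
    le'' le1 le2 a c :=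
  ⟨le1_trans h hab.1 hbc.1, le2_trans h hbc.2 hab.2⟩

lemma lle_antisymm {a b : P} (hab : le'' le1 le2 a b) (hba : le'' le1 le2 b a) : a = b :=
  le1_antisymm h hab.1 hba.1

/-- Decomposition of the set of chains with elements in a down-closed set `p`:
the empty chain, plus, for each `z` with `p z`, the chains with maximum `z`. -/
lemma decomp_card (p : P → Prop) [DecidablePred p]
    (hp : ∀ a b, le'' le1 le2 a b → p b → p a) [DecidablePred (fun C : Finset P =>
      (∀ a ∈ C, p a) ∧ ∀ a ∈ C, ∀ b ∈ C, le'' le1 le2 a b ∨ le'' le1 le2 b a)] :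
    (univ.filter (fun C : Finset P =>
      (∀ a ∈ C, p a) ∧ ∀ a ∈ C, ∀ b ∈ C, le'' le1 le2 a b ∨ le'' le1 le2 b a)).card
      = 1 + ∑ z ∈ univ.filter p, (CMax le1 le2 z).card := by
  classical
  have hset : (univ.filter (fun C : Finset P =>
      (∀ a ∈ C, p a) ∧ ∀ a ∈ C, ∀ b ∈ C, le'' le1 le2 a b ∨ le'' le1 le2 b a))
      = insert (∅ : Finset P) ((univ.filter p).biUnion (fun z => CMax le1 le2 z)) := by
    ext C
    simp only [mem_filter, mem_univ, true_and, mem_insert, mem_biUnion, CMax]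
    constructor
    · rintro ⟨hp', hchain⟩
      rcases C.eq_empty_or_nonempty with rfl | hC
      · exact Or.inl rfl
      · obtain ⟨m, hm, hmax⟩ := myExistsTop (r := le'' le1 le2) (fun hab hbc => lle_trans h hab hbc) C hC hchain
        exact Or.inr ⟨m, hp' m hm, hm, hmax, hchain⟩
    · rintro (rfl | ⟨z, hz, hzC, hbound, hchain⟩)
      · simp
      · exact ⟨fun a ha => hp a z (hbound a ha) hz, hchain⟩
  have hdisj : ∀ z ∈ univ.filter p, ∀ z' ∈ univ.filter p, z ≠ z' →
      Disjoint (CMax le1 le2 z) (CMax le1 le2 z') := by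
    intro z hz z' hz' hne
    rw [Finset.disjoint_left]
    intro C hCz hCz'
    simp only [CMax, mem_filter, mem_univ, true_and] at hCz hCz'
    exact hne (lle_antisymm h (hCz'.2.1 z hCz.1) (hCz.2.1 z' hCz'.1))
  have hnm : (∅ : Finset P) ∉ (univ.filter p).biUnion (fun z => CMax le1 le2 z) := by
    simp only [mem_biUnion, not_exists, not_and]
    intro z hz hmem
    simp only [CMax, mem_filter] at hmem
    exact absurd hmem.2.1 (notMem_empty z)
  rw [hset, card_insert_of_notMem hnm, card_biUnion hdisj, add_comm]

lemma cmax_card (y : P) [DecidablePred (fun z => le'' le1 le2 z y ∧ z ≠ y)] :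
    (CMax le1 le2 y).card =
      1 + ∑ z ∈ univ.filter (fun z => le'' le1 le2 z y ∧ z ≠ y), (CMax le1 le2 z).card := by
  classical
  have hp : ∀ a b, le'' le1 le2 a b → (le'' le1 le2 b y ∧ b ≠ y) →
      (le'' le1 le2 a y ∧ a ≠ y) := by
    rintro a b hab ⟨hby, hbny⟩
    refine ⟨lle_trans h hab hby, ?_⟩
    rintro rfl
    exact hbny (lle_antisymm h hby hab)
  rw [← decomp_card h (fun z => le'' le1 le2 z y ∧ z ≠ y) hp]
  apply Finset.card_bij (fun C _ => C.erase y)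
  · intro C hC
    simp only [CMax, mem_filter, mem_univ, true_and] at hC
    obtain ⟨hyC, hb, hc⟩ := hC
    simp only [mem_filter, mem_univ, true_and]
    constructor
    · intro a ha
      rw [mem_erase] at ha
      exact ⟨hb a ha.2, ha.1⟩
    · intro a ha b hb
      rw [mem_erase] at ha hb
      exact hc a ha.2 b hb.2
  · intro C₁ h₁ C₂ h₂ heq
    simp only [CMax, mem_filter, mem_univ, true_and] at h₁ h₂
    rw [← Finset.insert_erase h₁.1, ← Finset.insert_erase h₂.1, heq]
  · intro C' hC'
    simp only [mem_filter, mem_univ, true_and] at hC'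
    obtain ⟨hbound, hchain⟩ := hC'
    have hyn : y ∉ C' := fun hy => (hbound y hy).2 rfl
    refine ⟨insert y C', ?_, by rw [Finset.erase_insert hyn]⟩
    simp only [CMax, mem_filter, mem_univ, true_and]
    refine ⟨mem_insert_self y C', ?_, ?_⟩
    · intro a ha
      rcases mem_insert.1 ha with ha' | ha'
      · rw [ha']; exact lle_refl h y
      · exact (hbound a ha').1
    · intro a ha b hb
      rcases mem_insert.1 ha with ha' | ha' <;> rcases mem_insert.1 hb with hb' | hb'
      · rw [ha', hb']; exact Or.inl (lle_refl h y)
      · rw [ha']; exact Or.inr (hbound b hb').1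
      · rw [hb']; exact Or.inl (hbound a ha').1
      · exact hchain a ha' b hb' 

end Realizer

open Classical in
noncomputable def AllChains (le1 le2 : P → P → Prop) : Finset (Finset P) :=
  univ.filter (fun C => ∀ a ∈ C, ∀ b ∈ C, le'' le1 le2 a b ∨ le'' le1 le2 b a)

section Realizer2
variable (h : IsRealizer le1 le2)
include h

lemma allChains_card :
    (AllChains le1 le2).card = 1 + ∑ z, (CMax le1 le2 z).card := by
  classical
  have hd := decomp_card h (fun _ : P => True) (fun _ _ _ _ => trivial)
  have he : (univ.filter (fun C : Finset P =>
      (∀ a ∈ C, True) ∧ ∀ a ∈ C, ∀ b ∈ C, le'' le1 le2 a b ∨ le'' le1 le2 b a))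
      = AllChains le1 le2 := by
    unfold AllChains
    apply Finset.filter_congr
    intro C _
    simp
  rw [← he, hd, Finset.filter_true]

end Realizer2

lemma exists_le_maximal' (s : Finset P) {a : P} (ha : a ∈ s) :
    ∃ m ∈ s, a ≤ m ∧ ∀ b ∈ s, m ≤ b → m = b := by
  obtain ⟨m, hm, hmax⟩ := Set.Finite.exists_maximalFor id {b : P | b ∈ s ∧ a ≤ b}
    (Set.toFinite _) ⟨a, ha, le_refl a⟩
  exact ⟨m, hm.1, hm.2, fun b hb hmb => le_antisymm hmb (hmax ⟨hb, hm.2.trans hmb⟩ hmb)⟩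

/-- The set of maximal elements of a finset. -/
def maxSet (A : Finset P) : Finset P := A.filter (fun x => ∀ b ∈ A, x ≤ b → x = b)

/-- The lower closure of a finset. -/
def clos (C : Finset P) : Finset P := univ.filter (fun y => ∃ x ∈ C, y ≤ x)

lemma clos_lower (C : Finset P) : IsLowerSet (↑(clos C) : Set P) := by
  intro a b hba ha
  simp only [clos, coe_filter, Set.mem_setOf_eq, mem_univ, true_and] at *
  obtain ⟨x, hx, hax⟩ := ha
  exact ⟨x, hx, hba.trans hax⟩

lemma clos_maxSet (A : DownSet P) : clos (maxSet A.1) = A.1 := by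
  ext y
  simp only [clos, maxSet, mem_filter, mem_univ, true_and]
  constructor
  · rintro ⟨x, ⟨hxA, -⟩, hyx⟩
    exact A.2 hyx hxA
  · intro hy
    obtain ⟨m, hm, ham, hmax⟩ := exists_le_maximal' A.1 hy
    exact ⟨m, ⟨hm, hmax⟩, ham⟩

lemma maxSet_clos_subset (C : Finset P) : maxSet (clos C) ⊆ C := by
  intro x hx
  simp only [maxSet, clos, mem_filter, mem_univ, true_and] at hx
  obtain ⟨⟨c, hc, hxc⟩, hmax⟩ := hx
  have : x = c := hmax c ⟨c, hc, le_refl c⟩ hxc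
  exact this ▸ hc

section Realizer3
variable (h : IsRealizer le1 le2)
include h

lemma maxSet_mem_allChains (A : DownSet P) : maxSet A.1 ∈ AllChains le1 le2 := by
  classical
  simp only [AllChains, mem_filter, mem_univ, true_and]
  intro x hx y hy
  simp only [maxSet, mem_filter] at hx hy
  by_cases hxy : x = y
  · exact Or.inl (hxy ▸ lle_refl h x)
  · have hnxy : ¬ x ≤ y := fun hle => hxy (hx.2 y hy.1 hle)
    have hnyx : ¬ y ≤ x := fun hle => hxy ((hy.2 x hx.1 hle).symm)
    rcases le1_total h x y with h1 | h1
    · have h2 : ¬ le2 x y := fun h2 => hnxy ((h.2.2 x y).2 ⟨h1, h2⟩)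
      rcases le2_total h x y with h2' | h2'
      · exact absurd h2' h2
      · exact Or.inl ⟨h1, h2'⟩
    · have h2 : ¬ le2 y x := fun h2 => hnyx ((h.2.2 y x).2 ⟨h1, h2⟩)
      rcases le2_total h y x with h2' | h2'
      · exact absurd h2' h2
      · exact Or.inr ⟨h1, h2'⟩

lemma maxSet_clos (C : Finset P) (hC : C ∈ AllChains le1 le2) : maxSet (clos C) = C := by
  classical
  simp only [AllChains, mem_filter, mem_univ, true_and] at hC
  apply Finset.Subset.antisymm (maxSet_clos_subset C)
  intro x hx
  simp only [maxSet, clos, mem_filter, mem_univ, true_and]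
  refine ⟨⟨x, hx, le_refl x⟩, ?_⟩
  intro b hb hxb
  obtain ⟨c, hc, hbc⟩ := hb
  have hxc : x ≤ c := hxb.trans hbc
  have hxceq : x = c := by
    rcases hC x hx c hc with ⟨h1, h2⟩ | ⟨h1, h2⟩
    · exact le2_antisymm h ((h.2.2 x c).1 hxc).2 h2
    · exact le1_antisymm h ((h.2.2 x c).1 hxc).1 h1
  exact le_antisymm hxb (hxceq ▸ hbc)

lemma card_downSet : Fintype.card (DownSet P) = (AllChains le1 le2).card := by
  classical
  rw [← Finset.card_univ]
  apply Finset.card_bij (fun (A : DownSet P) _ => maxSet A.1)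
  · intro A _
    exact maxSet_mem_allChains h A
  · intro A₁ _ A₂ _ heq
    apply Subtype.ext
    rw [← clos_maxSet A₁, ← clos_maxSet A₂, heq]
  · intro C hC
    exact ⟨⟨clos C, clos_lower C⟩, mem_univ _, maxSet_clos h C hC⟩

lemma pred_lemma (A : DownSet P) (hA : A.1.Nonempty) :
    ∃ B : DownSet P, vval (chainCount le1 le2) B + 1 = vval (chainCount le1 le2) A := by
  classical
  obtain ⟨x, hxA, hxmax⟩ := myExistsTop (r := le2) (fun hab hbc => le2_trans h hab hbc)
    A.1 hA (fun a _ b _ => le2_total h a b)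
  set D := univ.filter (fun z => le'' le1 le2 z x ∧ z ≠ x) with hD
  have hlower : IsLowerSet (↑((A.1.erase x) ∪ D) : Set P) := by
    intro a b hba ha
    simp only [coe_union, Set.mem_union, coe_erase, Set.mem_diff, Set.mem_singleton_iff,
      hD, coe_filter, Set.mem_setOf_eq, mem_univ, true_and, mem_coe] at ha ⊢
    rcases ha with ⟨haA, hax⟩ | ⟨⟨h1ax, h2xa⟩, hax⟩
    · have hbA : b ∈ A.1 := A.2 hba haA
      have hbx : b ≠ x := by
        rintro rfl
        exact hax (le2_antisymm h (hxmax a haA) ((h.2.2 b a).1 hba).2)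
      exact Or.inl ⟨hbA, hbx⟩
    · obtain ⟨h1ba, h2ba⟩ := (h.2.2 b a).1 hba
      have h1bx : le1 b x := le1_trans h h1ba h1ax
      have hbx : b ≠ x := by
        rintro rfl
        exact hax (le1_antisymm h h1ax h1ba)
      rcases le2_total h b x with h2bx | h2xb
      · exact Or.inl ⟨A.2 ((h.2.2 b x).2 ⟨h1bx, h2bx⟩) hxA, hbx⟩
      · exact Or.inr ⟨⟨h1bx, h2xb⟩, hbx⟩
  refine ⟨⟨(A.1.erase x) ∪ D, hlower⟩, ?_⟩
  have hdisj : Disjoint (A.1.erase x) D := by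
    rw [Finset.disjoint_left]
    intro a ha haD
    simp only [hD, mem_filter, mem_univ, true_and] at haD
    rw [mem_erase] at ha
    exact haD.2 (le2_antisymm h (hxmax a ha.2) haD.1.2)
  have hrec : chainCount le1 le2 x = 1 + ∑ z ∈ D, chainCount le1 le2 z := by
    rw [chainCount_eq_card, cmax_card h x]
    congr 1
    apply Finset.sum_congr rfl
    intro z _
    rw [chainCount_eq_card]
  show ∑ a ∈ (A.1.erase x) ∪ D, chainCount le1 le2 a + 1 = ∑ a ∈ A.1, chainCount le1 le2 a
  rw [Finset.sum_union hdisj, ← Finset.add_sum_erase _ _ hxA, hrec]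
  ring

end Realizer3

end MyAux

/-- For a realizer `{Λ₁, Λ₂}`, the valuation with weights counting chains in the
complementary poset is a bijection onto `{0,…,|L|-1}`. -/
theorem stmt8 (le1 le2 : P → P → Prop) (h : IsRealizer le1 le2) :
    Set.BijOn (vval (chainCount le1 le2)) Set.univ
      {k | k < Fintype.card (DownSet P)} := by
  classical
  set w := chainCount le1 le2 with hw
  set N := Fintype.card (DownSet P) with hN
  have hT : IsLowerSet (↑(univ : Finset P) : Set P) := by intro a b _ _; simp
  set T : DownSet P := ⟨univ, hT⟩ with hTdef
  have hcard : N = 1 + vval w T := by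
    rw [hN, card_downSet h, allChains_card h]
    congr 1
    rw [vval]
    apply Finset.sum_congr rfl
    intro z _
    rw [hw]
    exact (chainCount_eq_card z).symm
  have hle : ∀ A : DownSet P, vval w A ≤ vval w T := by
    intro A
    apply Finset.sum_le_sum_of_subset
    intro a _
    exact mem_univ a
  have hreach : ∀ n : ℕ, ∀ A : DownSet P, ∀ m, vval w A = m + n → ∃ B, vval w B = m := by
    intro n
    induction n with
    | zero => exact fun A m hm => ⟨A, by omega⟩
    | succ n ih =>
      intro A m hm
      have hAne : A.1.Nonempty := by
        rcases A.1.eq_empty_or_nonempty with he | hne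
        · exfalso
          have h0 : vval w A = 0 := by rw [vval, he]; exact Finset.sum_empty
          omega
        · exact hne
      obtain ⟨B, hB⟩ := pred_lemma h A hAne
      rw [← hw] at hB
      exact ih B m (by omega)
  have hmaps : Set.MapsTo (vval w) Set.univ {k | k < N} := by
    intro A _
    have := hle A
    simp only [Set.mem_setOf_eq]
    omega
  have hsurj : Set.SurjOn (vval w) Set.univ {k | k < N} := by
    intro k hk
    simp only [Set.mem_setOf_eq] at hk
    obtain ⟨B, hB⟩ := hreach (vval w T - k) T k (by omega)
    exact ⟨B, Set.mem_univ B, hB⟩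
  refine ⟨hmaps, ?_, hsurj⟩
  have hncard : (Set.univ : Set (DownSet P)).ncard ≤ ({k | k < N} : Set ℕ).ncard := by
    have h1 : (Set.univ : Set (DownSet P)).ncard = N := by
      rw [Set.ncard_univ, Nat.card_eq_fintype_card]
    have h2 : ({k | k < N} : Set ℕ) = ↑(Finset.range N) := by
      ext k; simp
    rw [h1, h2, Set.ncard_coe_finset, Finset.card_range]
  intro a ha b hb hab
  exact Set.inj_on_of_surj_on_of_ncard_le (f := fun A _ => vval w A)
    (fun A hA => hmaps hA)
    (fun k hk => by obtain ⟨B, hBu, hB⟩ := hsurj hk; exact ⟨B, hBu, hB⟩)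
    hncard ha hb hab (Set.toFinite _)
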